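/- Let A ∈ ℝ^{n×n} be stable and let K ⊆ ℝ^{r×r} be a nonempty compact set every element of which is stable. Then there exists a constant c > 0 such that for every A_r ∈ K and every M ∈ ℝ^{n×r}, if Z ∈ ℝ^{n×r} satisfies the Sylvester equation A Z + Z A_rᵀ + M = 0, then ‖Z‖_F ≤ c ‖M‖_F. -/

import Mathlib

open Matrix Polynomial

/-- A square real matrix is stable if every eigenvalue (as a complex matrix)
has negative real part. -/
def IsStable {r : ℕ} (A : Matrix (Fin r) (Fin r) ℝ) : Prop :=
  ∀ μ ∈ spectrum ℂ (A.map Complex.ofReal), μ.re < 0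

/-- The Frobenius norm of a real matrix. -/
noncomputable def frobNorm {m n : ℕ} (M : Matrix (Fin m) (Fin n) ℝ) : ℝ :=
  Real.sqrt (Matrix.trace (Mᵀ * M))

section Aux

lemma my_charpoly_eval {r : ℕ} (M : Matrix (Fin r) (Fin r) ℂ) (μ : ℂ) :
    M.charpoly.eval μ = (Matrix.scalar (Fin r) μ - M).det := by
  rw [Matrix.charpoly, eval_det, matPolyEquiv_charmatrix, eval_sub, eval_X, eval_C]

lemma my_mem_spectrum_iff_isRoot {r : ℕ} (M : Matrix (Fin r) (Fin r) ℂ) (μ : ℂ) :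
    μ ∈ spectrum ℂ M ↔ M.charpoly.IsRoot μ := by
  rw [spectrum.mem_iff, Matrix.isUnit_iff_isUnit_det, isUnit_iff_ne_zero, not_ne_iff,
    IsRoot, my_charpoly_eval]
  have : (algebraMap ℂ (Matrix (Fin r) (Fin r) ℂ)) μ = Matrix.scalar (Fin r) μ := rfl
  rw [this]

lemma my_spectrum_transpose {r : ℕ} (M : Matrix (Fin r) (Fin r) ℂ) :
    spectrum ℂ Mᵀ = spectrum ℂ M := by
  ext μ
  rw [spectrum.mem_iff, spectrum.mem_iff, not_iff_not,
    Matrix.isUnit_iff_isUnit_det, Matrix.isUnit_iff_isUnit_det]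
  have h : (algebraMap ℂ (Matrix (Fin r) (Fin r) ℂ)) μ - Mᵀ =
      ((algebraMap ℂ (Matrix (Fin r) (Fin r) ℂ)) μ - M)ᵀ := by
    rw [Matrix.transpose_sub]
    congr 1
    · show _ = (Matrix.scalar (Fin r) μ)ᵀ
      rw [Matrix.scalar_apply, Matrix.diagonal_transpose]
      rfl
  rw [h, Matrix.det_transpose]

/-- Injectivity of the Sylvester operator for stable `A`, `B`. -/
lemma sylvester_inj {n r : ℕ} (A : Matrix (Fin n) (Fin n) ℝ) (hA : IsStable A)
    (B : Matrix (Fin r) (Fin r) ℝ) (hB : IsStable B)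
    (Z : Matrix (Fin n) (Fin r) ℝ) (hZ : A * Z + Z * Bᵀ = 0) : Z = 0 := by
  rcases Nat.eq_zero_or_pos r with hr | hr
  · subst hr
    ext i j
    exact absurd j.2 (by simp)
  set Ac : Matrix (Fin n) (Fin n) ℂ := A.map Complex.ofReal with hAc
  set Cc : Matrix (Fin r) (Fin r) ℂ := -((Bᵀ).map Complex.ofReal) with hCc
  set Zc : Matrix (Fin n) (Fin r) ℂ := Z.map Complex.ofReal with hZc
  have hmul : ∀ {a b c : ℕ} (X : Matrix (Fin a) (Fin b) ℝ) (Y : Matrix (Fin b) (Fin c) ℝ),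
      (X * Y).map (Complex.ofReal : ℝ → ℂ) = X.map Complex.ofReal * Y.map Complex.ofReal := by
    intro a b c X Y
    ext i j
    simp [Matrix.mul_apply]
  have hAZ : Ac * Zc = Zc * Cc := by
    have h : A * Z = -(Z * Bᵀ) := eq_neg_of_add_eq_zero_left hZ
    rw [hCc, Matrix.mul_neg, hAc, hZc, ← hmul, ← hmul, h]
    ext i j
    simp [Matrix.map_apply]
  have hpow : ∀ k : ℕ, Ac ^ k * Zc = Zc * Cc ^ k := by
    intro k
    induction k with
    | zero => simp
    | succ k ih =>
      calc Ac ^ (k + 1) * Zc = Ac * (Ac ^ k * Zc) := by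
            rw [pow_succ', Matrix.mul_assoc]
      _ = Ac * (Zc * Cc ^ k) := by rw [ih]
      _ = (Ac * Zc) * Cc ^ k := by rw [Matrix.mul_assoc]
      _ = (Zc * Cc) * Cc ^ k := by rw [hAZ]
      _ = Zc * Cc ^ (k + 1) := by rw [Matrix.mul_assoc, ← pow_succ']
  have haeval : ∀ p : ℂ[X], (aeval Ac p) * Zc = Zc * (aeval Cc p) := by
    intro p
    induction p using Polynomial.induction_on' with
    | add p q hp hq => simp only [map_add, Matrix.add_mul, Matrix.mul_add, hp, hq]
    | monomial k a =>
      simp only [aeval_monomial, Algebra.algebraMap_eq_smul_one, smul_mul_assoc, one_mul,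
        Matrix.smul_mul, Matrix.mul_smul, hpow k]
  -- plug in the characteristic polynomial of Cc
  have hkill : (aeval Ac Cc.charpoly) * Zc = 0 := by
    rw [haeval, Matrix.aeval_self_charpoly, Matrix.mul_zero]
  -- aeval Ac charpoly(Cc) is a unit
  have hdeg : 0 < Cc.charpoly.degree := by
    rw [Matrix.charpoly_degree_eq_dim, Fintype.card_fin]
    exact_mod_cast hr
  have hspec := spectrum.map_polynomial_aeval_of_degree_pos Ac Cc.charpoly hdeg
  have hunit : IsUnit (aeval Ac Cc.charpoly) := by
    rw [← spectrum.zero_notMem_iff ℂ, hspec]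
    rintro ⟨μ, hμ, hev⟩
    have hμA : μ.re < 0 := hA μ hμ
    have hμC : μ ∈ spectrum ℂ Cc := (my_mem_spectrum_iff_isRoot Cc μ).2 hev
    have hneg : -μ ∈ spectrum ℂ ((Bᵀ).map Complex.ofReal) := by
      have : -μ ∈ -spectrum ℂ Cc := by simpa using hμC
      rw [spectrum.neg_eq] at this
      simpa [hCc] using this
    have htr : (Bᵀ).map Complex.ofReal = (B.map Complex.ofReal)ᵀ := by
      ext i j; simp
    rw [htr, my_spectrum_transpose] at hneg
    have := hB (-μ) hneg
    simp only [Complex.neg_re] at this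
    linarith
  -- conclude Zc = 0, hence Z = 0
  have hZc0 : Zc = 0 := by
    obtain ⟨u, hu⟩ := hunit
    have h1 : (↑u⁻¹ : Matrix (Fin n) (Fin n) ℂ) * ((aeval Ac Cc.charpoly) * Zc) = Zc := by
      rw [← Matrix.mul_assoc, ← hu, Units.inv_mul, Matrix.one_mul]
    rw [← h1, hkill, Matrix.mul_zero]
  ext i j
  have := congrFun (congrFun hZc0 i) j
  simpa [hZc, Matrix.map_apply] using this

attribute [local instance] Matrix.normedAddCommGroup Matrix.normedSpace

/-- The topology of the sup norm on real matrices. -/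
@[reducible] noncomputable def matNormTop {m n : ℕ} : TopologicalSpace (Matrix (Fin m) (Fin n) ℝ) :=
  PseudoMetricSpace.toUniformSpace.toTopologicalSpace

attribute [local instance 2000] matNormTop

lemma my_norm_mul_le {a b c : ℕ} (X : Matrix (Fin a) (Fin b) ℝ)
    (Y : Matrix (Fin b) (Fin c) ℝ) : ‖X * Y‖ ≤ (b : ℝ) * ‖X‖ * ‖Y‖ := by
  have hb : (0:ℝ) ≤ (b : ℝ) * ‖X‖ * ‖Y‖ := by positivity
  rw [Matrix.norm_le_iff hb]
  intro i j
  rw [Matrix.mul_apply]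
  calc ‖∑ k, X i k * Y k j‖ ≤ ∑ k, ‖X i k * Y k j‖ := norm_sum_le _ _
  _ ≤ ∑ _k : Fin b, ‖X‖ * ‖Y‖ := by
      refine Finset.sum_le_sum fun k _ => ?_
      rw [norm_mul]
      exact mul_le_mul (Matrix.norm_entry_le_entrywise_sup_norm X)
        (Matrix.norm_entry_le_entrywise_sup_norm Y) (norm_nonneg _) (norm_nonneg _)
  _ = (b : ℝ) * ‖X‖ * ‖Y‖ := by
      rw [Finset.sum_const, Finset.card_univ, Fintype.card_fin, nsmul_eq_mul, mul_assoc]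

lemma frobNorm_eq {m n : ℕ} (M : Matrix (Fin m) (Fin n) ℝ) :
    frobNorm M = Real.sqrt (∑ i, ∑ j, (M i j) ^ 2) := by
  have h : Matrix.trace (Mᵀ * M) = ∑ i, ∑ j, (M i j) ^ 2 := by
    simp only [Matrix.trace, Matrix.diag, Matrix.mul_apply, Matrix.transpose_apply, sq]
    exact Finset.sum_comm
  rw [frobNorm, h]

lemma norm_le_frobNorm {m n : ℕ} (M : Matrix (Fin m) (Fin n) ℝ) : ‖M‖ ≤ frobNorm M := by
  rw [frobNorm_eq, Matrix.norm_le_iff (Real.sqrt_nonneg _)]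
  intro i j
  have ha : (M i j) ^ 2 ≤ ∑ j' : Fin n, (M i j') ^ 2 :=
    Finset.single_le_sum (f := fun j' => (M i j') ^ 2) (fun k _ => sq_nonneg _)
      (Finset.mem_univ j)
  have hb : ∑ j' : Fin n, (M i j') ^ 2 ≤ ∑ i' : Fin m, ∑ j' : Fin n, (M i' j') ^ 2 :=
    Finset.single_le_sum (f := fun i' => ∑ j' : Fin n, (M i' j') ^ 2)
      (fun k _ => Finset.sum_nonneg fun _ _ => sq_nonneg _) (Finset.mem_univ i)
  have h2 : ‖M i j‖ = Real.sqrt ((M i j) ^ 2) := by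
    rw [Real.sqrt_sq_eq_abs]; rfl
  rw [h2]
  exact Real.sqrt_le_sqrt (le_trans ha hb)

lemma frobNorm_le {m n : ℕ} (M : Matrix (Fin m) (Fin n) ℝ) :
    frobNorm M ≤ Real.sqrt (m * n) * ‖M‖ := by
  rw [frobNorm_eq]
  have h : ∑ i, ∑ j, (M i j) ^ 2 ≤ (m * n : ℝ) * ‖M‖ ^ 2 := by
    calc ∑ i, ∑ j, (M i j) ^ 2 ≤ ∑ _i : Fin m, ∑ _j : Fin n, ‖M‖ ^ 2 := by
          refine Finset.sum_le_sum fun i _ => Finset.sum_le_sum fun j _ => ?_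
          have := Matrix.norm_entry_le_entrywise_sup_norm M (i := i) (j := j)
          have h2 : |M i j| ≤ ‖M‖ := this
          nlinarith [abs_nonneg (M i j), sq_abs (M i j)]
    _ = (m * n : ℝ) * ‖M‖ ^ 2 := by
          simp [Finset.sum_const, mul_assoc]
  calc Real.sqrt (∑ i, ∑ j, (M i j) ^ 2) ≤ Real.sqrt ((m * n : ℝ) * ‖M‖ ^ 2) :=
        Real.sqrt_le_sqrt h
  _ = Real.sqrt (m * n) * ‖M‖ := by
        rw [Real.sqrt_mul (by positivity), Real.sqrt_sq (norm_nonneg _)]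

/-- The Sylvester operator as a linear map. -/
noncomputable def sylvOp {n r : ℕ} (A : Matrix (Fin n) (Fin n) ℝ)
    (B : Matrix (Fin r) (Fin r) ℝ) :
    Matrix (Fin n) (Fin r) ℝ →ₗ[ℝ] Matrix (Fin n) (Fin r) ℝ where
  toFun Z := A * Z + Z * Bᵀ
  map_add' Z W := by
    simp only [Matrix.mul_add, Matrix.add_mul]
    abel
  map_smul' c Z := by
    simp [Matrix.mul_smul, Matrix.smul_mul, smul_add]

/-- Main bound with the sup norm. -/
lemma sylvester_bound_sup {n r : ℕ}
    (A : Matrix (Fin n) (Fin n) ℝ) (hA : IsStable A)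
    (K : Set (Matrix (Fin r) (Fin r) ℝ)) (hKne : K.Nonempty)
    (hKcpt : IsCompact K) (hKstable : ∀ M ∈ K, IsStable M) :
    ∃ c ≥ (0 : ℝ), ∀ A_r ∈ K, ∀ M Z : Matrix (Fin n) (Fin r) ℝ,
      A * Z + Z * A_rᵀ + M = 0 → ‖Z‖ ≤ c * ‖M‖ := by
  set T : Matrix (Fin r) (Fin r) ℝ →
      (Matrix (Fin n) (Fin r) ℝ →L[ℝ] Matrix (Fin n) (Fin r) ℝ) :=
    fun B => LinearMap.toContinuousLinearMap (sylvOp A B) with hT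
  have hTcont : Continuous T := by
    rw [Metric.continuous_iff]
    intro B ε hε
    rcases eq_or_ne r 0 with hr | hr
    · subst hr
      refine ⟨1, one_pos, fun B' _ => ?_⟩
      have hBB : B' = B := by
        ext i j
        exact absurd j.2 (by simp)
      rw [hBB, dist_self]
      exact hε
    have hr' : (0:ℝ) < r := by positivity
    refine ⟨ε / r, by positivity, fun B' hB' => ?_⟩
    rw [dist_eq_norm]
    have hle : ‖T B' - T B‖ ≤ (r : ℝ) * ‖B' - B‖ := by
      refine ContinuousLinearMap.opNorm_le_bound _ (by positivity) fun Z => ?_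
      have : (T B' - T B) Z = Z * (B' - B)ᵀ := by
        show (A * Z + Z * B'ᵀ) - (A * Z + Z * Bᵀ) = Z * (B' - B)ᵀ
        rw [Matrix.transpose_sub, Matrix.mul_sub]
        abel
      rw [this]
      calc ‖Z * (B' - B)ᵀ‖ ≤ (r : ℝ) * ‖Z‖ * ‖(B' - B)ᵀ‖ := my_norm_mul_le _ _
      _ = (r : ℝ) * ‖B' - B‖ * ‖Z‖ := by rw [Matrix.norm_transpose]; ring
    calc ‖T B' - T B‖ ≤ (r : ℝ) * ‖B' - B‖ := hle
    _ < (r : ℝ) * (ε / r) := by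
        refine mul_lt_mul_of_pos_left ?_ hr'
        rw [← dist_eq_norm]; exact hB'
    _ = ε := by field_simp
  have hTunit : ∀ B ∈ K, IsUnit (T B) := by
    intro B hB
    rw [ContinuousLinearMap.isUnit_iff_bijective]
    have hinj : Function.Injective (sylvOp A B) := by
      rw [← LinearMap.ker_eq_bot, LinearMap.ker_eq_bot']
      intro Z hZ
      exact sylvester_inj A hA B (hKstable B hB) Z hZ
    exact ⟨hinj, LinearMap.injective_iff_surjective.mp hinj⟩
  have hcont : ContinuousOn (fun B => ‖Ring.inverse (T B)‖) K := by
    refine ContinuousOn.norm ?_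
    intro B hB
    have h1 : ContinuousAt Ring.inverse (T B) := by
      have := NormedRing.inverse_continuousAt (hTunit B hB).unit
      rwa [IsUnit.unit_spec] at this
    exact (h1.comp hTcont.continuousAt).continuousWithinAt
  obtain ⟨B₀, hB₀, hmax⟩ := hKcpt.exists_isMaxOn hKne hcont
  refine ⟨‖Ring.inverse (T B₀)‖, norm_nonneg _, fun B hB M Z hEq => ?_⟩
  have hTZ : (T B) Z = -M := by
    show A * Z + Z * Bᵀ = -M
    exact eq_neg_of_add_eq_zero_left hEq
  have hZ : Z = Ring.inverse (T B) (-M) := by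
    have h1 : Ring.inverse (T B) * T B = 1 := Ring.inverse_mul_cancel _ (hTunit B hB)
    calc Z = (Ring.inverse (T B) * T B) Z := by rw [h1]; rfl
    _ = Ring.inverse (T B) ((T B) Z) := rfl
    _ = Ring.inverse (T B) (-M) := by rw [hTZ]
  calc ‖Z‖ = ‖Ring.inverse (T B) (-M)‖ := by rw [hZ]
  _ ≤ ‖Ring.inverse (T B)‖ * ‖-M‖ := ContinuousLinearMap.le_opNorm _ _
  _ = ‖Ring.inverse (T B)‖ * ‖M‖ := by rw [norm_neg]
  _ ≤ ‖Ring.inverse (T B₀)‖ * ‖M‖ :=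
      mul_le_mul_of_nonneg_right (hmax hB) (norm_nonneg _)

lemma sylvester_uniform_bound_aux {n r : ℕ}
    (A : Matrix (Fin n) (Fin n) ℝ) (hA : IsStable A)
    (K : Set (Matrix (Fin r) (Fin r) ℝ)) (hKne : K.Nonempty)
    (hKcpt : IsCompact K) (hKstable : ∀ M ∈ K, IsStable M) :
    ∃ c > (0 : ℝ), ∀ A_r ∈ K, ∀ M Z : Matrix (Fin n) (Fin r) ℝ,
      A * Z + Z * A_rᵀ + M = 0 → frobNorm Z ≤ c * frobNorm M := by
  obtain ⟨c₀, hc₀, hbound⟩ := sylvester_bound_sup A hA K hKne hKcpt hKstable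
  refine ⟨(Real.sqrt (n * r) + 1) * (c₀ + 1), by positivity, fun B hB M Z hEq => ?_⟩
  have h1 : ‖Z‖ ≤ c₀ * ‖M‖ := hbound B hB M Z hEq
  have h2 : frobNorm Z ≤ Real.sqrt (n * r) * ‖Z‖ := by
    have := frobNorm_le Z; exact_mod_cast this
  have h3 : ‖M‖ ≤ frobNorm M := norm_le_frobNorm M
  have h4 : (0:ℝ) ≤ Real.sqrt (n*r) := Real.sqrt_nonneg _
  have h5 : (0:ℝ) ≤ ‖M‖ := norm_nonneg _
  have h6 : (0:ℝ) ≤ ‖Z‖ := norm_nonneg _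
  have h7 : (0:ℝ) ≤ frobNorm M := Real.sqrt_nonneg _
  calc frobNorm Z ≤ Real.sqrt ((n:ℝ) * r) * ‖Z‖ := h2
  _ ≤ Real.sqrt ((n:ℝ) * r) * (c₀ * ‖M‖) := mul_le_mul_of_nonneg_left h1 h4
  _ ≤ Real.sqrt ((n:ℝ) * r) * (c₀ * frobNorm M) :=
      mul_le_mul_of_nonneg_left (mul_le_mul_of_nonneg_left h3 hc₀) h4
  _ ≤ (Real.sqrt ((n:ℝ) * r) + 1) * (c₀ + 1) * frobNorm M := by nlinarith

end Aux

/-- uniform bound on solutions of the Sylvester equation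
`A Z + Z A_rᵀ + M = 0` over a compact set `K` of stable matrices `A_r`. -/
theorem sylvester_uniform_bound {n r : ℕ}
    (A : Matrix (Fin n) (Fin n) ℝ) (hA : IsStable A)
    (K : Set (Matrix (Fin r) (Fin r) ℝ)) (hKne : K.Nonempty)
    (hKcpt : IsCompact K) (hKstable : ∀ M ∈ K, IsStable M) :
    ∃ c > (0 : ℝ), ∀ A_r ∈ K, ∀ M Z : Matrix (Fin n) (Fin r) ℝ,
      A * Z + Z * A_rᵀ + M = 0 → frobNorm Z ≤ c * frobNorm M := by
  exact sylvester_uniform_bound_aux A hA K hKne hKcpt hKstable
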